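/- arXiv:1508.03921 — 2 statements merged into one kernel-verified Lean document; each statement's English description precedes it below -/
import Mathlib

section
/- The processes (X_t)_{t∈[0,∞]} and (Y_t)_{t∈[0,∞]} defined by X_t := ess inf_{σ∈𝒯_t} E[U(t,σ) | 𝓕_t] and Y_t := ess sup_{σ∈𝒯_t} E[U(σ,t) | 𝓕_t] are right continuous (pathwise, at every t ∈ [0,∞)). -/
/-!
Common setup for "On the non-zero-sum stopping game ending at the maximum of the stopping
strategies".  Time is indexed by `[0,∞] = ℝ≥0∞`.  Since `Ω` is at most countable and `ℙ`
charges every point, essential suprema/infima over families of stopping times coincide with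
the pointwise ones, which is how they are formalized below.
-/

open MeasureTheory Filter Set
open scoped ENNReal Topology

noncomputable section

namespace StoppingGames

variable {Ω : Type*} [mΩ : MeasurableSpace Ω]

/-- `|a - b|` on `[0,∞]`, via truncated subtraction. -/
def dd (a b : ℝ≥0∞) : ℝ≥0∞ := (a - b) + (b - a)

/-- `𝒯`, the set of stopping times with values in `[0,∞]`. -/
def ST (𝓕 : Filtration ℝ≥0∞ mΩ) : Set (Ω → ℝ≥0∞) := {τ | IsStoppingTime 𝓕 (fun ω => (τ ω : WithTop ℝ≥0∞))}

/-- `𝒯_σ`, the stopping times no less than `σ`. -/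
def STge (𝓕 : Filtration ℝ≥0∞ mΩ) (σ : Ω → ℝ≥0∞) : Set (Ω → ℝ≥0∞) :=
  {τ | IsStoppingTime 𝓕 (fun ω => (τ ω : WithTop ℝ≥0∞)) ∧ ∀ ω, σ ω ≤ τ ω}

/-- `𝒯_{t+}`, the stopping times strictly greater than `t`. -/
def STgt (𝓕 : Filtration ℝ≥0∞ mΩ) (t : ℝ≥0∞) : Set (Ω → ℝ≥0∞) :=
  {τ | IsStoppingTime 𝓕 (fun ω => (τ ω : WithTop ℝ≥0∞)) ∧ ∀ ω, t < τ ω}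

/-- The class `𝕋` of jointly measurable maps `φ : [0,∞] × Ω → [0,∞]` with
`φ(t,·) ∈ 𝒯_{t+}` for every finite `t`. -/
def IsTT (𝓕 : Filtration ℝ≥0∞ mΩ) (φ : ℝ≥0∞ → Ω → ℝ≥0∞) : Prop :=
  Measurable (Function.uncurry φ) ∧ ∀ t : ℝ≥0∞, t ≠ ∞ → φ t ∈ STgt 𝓕 t

/-- A stopping strategy `ρ = (ρ₀, ρ₁) ∈ 𝔗`. -/
def IsStrategy (𝓕 : Filtration ℝ≥0∞ mΩ) (ρ : (Ω → ℝ≥0∞) × (ℝ≥0∞ → Ω → ℝ≥0∞)) : Prop :=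
  IsStoppingTime 𝓕 (fun ω => (ρ.1 ω : WithTop ℝ≥0∞)) ∧ IsTT 𝓕 ρ.2

/-- `𝔗_σ`, the stopping strategies whose first component is `≥ σ`. -/
def IsStrategyGe (𝓕 : Filtration ℝ≥0∞ mΩ) (σ : Ω → ℝ≥0∞)
    (ρ : (Ω → ℝ≥0∞) × (ℝ≥0∞ → Ω → ℝ≥0∞)) : Prop :=
  IsStrategy 𝓕 ρ ∧ ∀ ω, σ ω ≤ ρ.1 ω

/-- `ρ[τ] = ρ₀ 1_{ρ₀ ≤ τ₀} + ρ₁(τ₀) 1_{ρ₀ > τ₀}`. -/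
def play (ρ τ : (Ω → ℝ≥0∞) × (ℝ≥0∞ → Ω → ℝ≥0∞)) : Ω → ℝ≥0∞ := fun ω =>
  if ρ.1 ω ≤ τ.1 ω then ρ.1 ω else ρ.2 (τ.1 ω) ω

/-- `u(ρ,τ) = E[U(ρ[τ], τ[ρ])]`. -/
def payoff (μ : Measure Ω) (U : ℝ≥0∞ → ℝ≥0∞ → Ω → ℝ)
    (ρ τ : (Ω → ℝ≥0∞) × (ℝ≥0∞ → Ω → ℝ≥0∞)) : ℝ :=
  ∫ ω, U (play ρ τ ω) (play τ ρ ω) ω ∂μ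

/-- `u_σ(ρ,τ) = E[U(ρ[τ], τ[ρ]) | m]`. -/
def condPayoff (μ : Measure Ω) (m : MeasurableSpace Ω) (U : ℝ≥0∞ → ℝ≥0∞ → Ω → ℝ)
    (ρ τ : (Ω → ℝ≥0∞) × (ℝ≥0∞ → Ω → ℝ≥0∞)) : Ω → ℝ :=
  μ[fun ω => U (play ρ τ ω) (play τ ρ ω) ω | m]

/-- The grid point `n·h ∈ [0,∞]`. -/
def grid (h : ℝ) (n : ℕ) : ℝ≥0∞ := ENNReal.ofReal (n * h)

/-- `⌊t/h⌋ + 1`. -/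
def gridIdx (h : ℝ) (t : ℝ≥0∞) : ℕ := ⌊t.toReal / h⌋₊ + 1

/-- `ρ_h(t) := ρ̄((⌊t/h⌋+1)h)` for finite `t`, and `ρ_h(∞) := ∞`. -/
def gridStrat (h : ℝ) (bar : ℕ → Ω → ℝ≥0∞) : ℝ≥0∞ → Ω → ℝ≥0∞ := fun t ω =>
  if t = ∞ then ∞ else bar (gridIdx h t) ω

/-- Evaluation `φ(σ) : ω ↦ φ(σ(ω), ω)` of a time-indexed family along a random time. -/
def evalAt (φ : ℝ≥0∞ → Ω → ℝ≥0∞) (σ : Ω → ℝ≥0∞) : Ω → ℝ≥0∞ := fun ω => φ (σ ω) ω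

/-- `X_t = ess inf_{σ ∈ 𝒯_t} E[U(t,σ) | 𝓕_t]` (pointwise infimum, which coincides with the
essential one since `Ω` is countable and every point is charged). -/
def X1v (μ : Measure Ω) (𝓕 : Filtration ℝ≥0∞ mΩ) (U : ℝ≥0∞ → ℝ≥0∞ → Ω → ℝ)
    (t : ℝ≥0∞) (ω : Ω) : ℝ :=
  ⨅ σ : STge 𝓕 (fun _ => t), (μ[fun ω' => U t (σ.1 ω') ω' | 𝓕 t]) ω

/-- `Y_t = ess sup_{σ ∈ 𝒯_t} E[U(σ,t) | 𝓕_t]`. -/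
def Y1v (μ : Measure Ω) (𝓕 : Filtration ℝ≥0∞ mΩ) (U : ℝ≥0∞ → ℝ≥0∞ → Ω → ℝ)
    (t : ℝ≥0∞) (ω : Ω) : ℝ :=
  ⨆ σ : STge 𝓕 (fun _ => t), (μ[fun ω' => U (σ.1 ω') t ω' | 𝓕 t]) ω

/-- Player 2: `X²_t = ess sup_{σ ∈ 𝒯_t} E[U²(t,σ) | 𝓕_t]`. -/
def X2v (μ : Measure Ω) (𝓕 : Filtration ℝ≥0∞ mΩ) (U : ℝ≥0∞ → ℝ≥0∞ → Ω → ℝ)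
    (t : ℝ≥0∞) (ω : Ω) : ℝ :=
  ⨆ σ : STge 𝓕 (fun _ => t), (μ[fun ω' => U t (σ.1 ω') ω' | 𝓕 t]) ω

/-- Player 2: `Y²_t = ess inf_{σ ∈ 𝒯_t} E[U²(σ,t) | 𝓕_t]`. -/
def Y2v (μ : Measure Ω) (𝓕 : Filtration ℝ≥0∞ mΩ) (U : ℝ≥0∞ → ℝ≥0∞ → Ω → ℝ)
    (t : ℝ≥0∞) (ω : Ω) : ℝ :=
  ⨅ σ : STge 𝓕 (fun _ => t), (μ[fun ω' => U (σ.1 ω') t ω' | 𝓕 t]) ω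

/-- `Z_t = U(t,t)`. -/
def Zv (U : ℝ≥0∞ → ℝ≥0∞ → Ω → ℝ) : ℝ≥0∞ → Ω → ℝ := fun t ω => U t t ω

/-- `X_{ρ₀} 1_{ρ₀ < τ₀} + Y_{τ₀} 1_{ρ₀ > τ₀} + Z_{ρ₀} 1_{ρ₀ = τ₀}`. -/
def dynkinKernel (X Y Z : ℝ≥0∞ → Ω → ℝ) (ρ₀ τ₀ : Ω → ℝ≥0∞) (ω : Ω) : ℝ :=
  if ρ₀ ω < τ₀ ω then X (ρ₀ ω) ω else if τ₀ ω < ρ₀ ω then Y (τ₀ ω) ω else Z (ρ₀ ω) ω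

/-- The Dynkin-game payoff `V(ρ₀,τ₀)`. -/
def dynkinV (μ : Measure Ω) (X Y Z : ℝ≥0∞ → Ω → ℝ) (ρ₀ τ₀ : Ω → ℝ≥0∞) : ℝ :=
  ∫ ω, dynkinKernel X Y Z ρ₀ τ₀ ω ∂μ

/-- The conditional Dynkin-game payoff. -/
def condDynkin (μ : Measure Ω) (m : MeasurableSpace Ω) (X Y Z : ℝ≥0∞ → Ω → ℝ)
    (ρ₀ τ₀ : Ω → ℝ≥0∞) : Ω → ℝ :=
  μ[fun ω => dynkinKernel X Y Z ρ₀ τ₀ ω | m]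

/-- `v_t¹`, the (sup-inf) value of the conditional Dynkin game `G_t¹` with payoffs
`(X¹, Y¹, Z¹)` built from `U¹`. -/
def v1v (μ : Measure Ω) (𝓕 : Filtration ℝ≥0∞ mΩ) (U : ℝ≥0∞ → ℝ≥0∞ → Ω → ℝ)
    (t : ℝ≥0∞) (ω : Ω) : ℝ :=
  ⨆ ρ₀ : STge 𝓕 (fun _ => t), ⨅ τ₀ : STge 𝓕 (fun _ => t),
    condDynkin μ (𝓕 t) (X1v μ 𝓕 U) (Y1v μ 𝓕 U) (Zv U) ρ₀.1 τ₀.1 ω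

/-- `v_t²`, the (inf-sup) value of the conditional Dynkin game `G_t²` with payoffs
`(X², Y², Z²)` built from `U²`. -/
def v2v (μ : Measure Ω) (𝓕 : Filtration ℝ≥0∞ mΩ) (U : ℝ≥0∞ → ℝ≥0∞ → Ω → ℝ)
    (t : ℝ≥0∞) (ω : Ω) : ℝ :=
  ⨅ ρ₀ : STge 𝓕 (fun _ => t), ⨆ τ₀ : STge 𝓕 (fun _ => t),
    condDynkin μ (𝓕 t) (X2v μ 𝓕 U) (Y2v μ 𝓕 U) (Zv U) ρ₀.1 τ₀.1 ω

/-- `W_t¹ = E[U¹(t, τ_h²(t)) | 𝓕_t]`. -/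
def W1v (μ : Measure Ω) (𝓕 : Filtration ℝ≥0∞ mΩ) (U : ℝ≥0∞ → ℝ≥0∞ → Ω → ℝ)
    (h : ℝ) (bar : ℕ → Ω → ℝ≥0∞) (t : ℝ≥0∞) (ω : Ω) : ℝ :=
  (μ[fun ω' => U t (gridStrat h bar t ω') ω' | 𝓕 t]) ω

/-- `W_t² = E[U²(ρ_h¹(t), t) | 𝓕_t]`. -/
def W2v (μ : Measure Ω) (𝓕 : Filtration ℝ≥0∞ mΩ) (U : ℝ≥0∞ → ℝ≥0∞ → Ω → ℝ)
    (h : ℝ) (bar : ℕ → Ω → ℝ≥0∞) (t : ℝ≥0∞) (ω : Ω) : ℝ :=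
  (μ[fun ω' => U (gridStrat h bar t ω') t ω' | 𝓕 t]) ω

/-- `μ₁ = inf {t ≥ 0 : v_t¹ ≤ W_t¹ + ε}`. -/
def mu1T (μ : Measure Ω) (𝓕 : Filtration ℝ≥0∞ mΩ) (U : ℝ≥0∞ → ℝ≥0∞ → Ω → ℝ)
    (h ε : ℝ) (bar : ℕ → Ω → ℝ≥0∞) : Ω → ℝ≥0∞ := fun ω =>
  sInf {t | v1v μ 𝓕 U t ω ≤ W1v μ 𝓕 U h bar t ω + ε}

/-- `μ₂ = inf {t ≥ 0 : v_t² ≤ W_t² + ε}`. -/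
def mu2T (μ : Measure Ω) (𝓕 : Filtration ℝ≥0∞ mΩ) (U : ℝ≥0∞ → ℝ≥0∞ → Ω → ℝ)
    (h ε : ℝ) (bar : ℕ → Ω → ℝ≥0∞) : Ω → ℝ≥0∞ := fun ω =>
  sInf {t | v2v μ 𝓕 U t ω ≤ W2v μ 𝓕 U h bar t ω + ε}

/-- `ρ̄(nh)` is a family of `ε`-optimizers for `Y¹_{nh}`:
`E[U(ρ̄(nh), nh) | 𝓕_{nh}] ≥ Y_{nh} − ε`. -/
def IsOptRho1 (μ : Measure Ω) (𝓕 : Filtration ℝ≥0∞ mΩ) (U : ℝ≥0∞ → ℝ≥0∞ → Ω → ℝ)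
    (ε h : ℝ) (bar : ℕ → Ω → ℝ≥0∞) : Prop :=
  ∀ n : ℕ, bar n ∈ STge 𝓕 (fun _ => grid h n) ∧
    ∀ᵐ ω ∂μ, Y1v μ 𝓕 U (grid h n) ω - ε ≤
      (μ[fun ω' => U (bar n ω') (grid h n) ω' | 𝓕 (grid h n)]) ω

/-- `τ̄(nh)` is a family of `ε`-optimizers for `X¹_{nh}`:
`E[U(nh, τ̄(nh)) | 𝓕_{nh}] ≤ X_{nh} + ε`. -/
def IsOptTau1 (μ : Measure Ω) (𝓕 : Filtration ℝ≥0∞ mΩ) (U : ℝ≥0∞ → ℝ≥0∞ → Ω → ℝ)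
    (ε h : ℝ) (bar : ℕ → Ω → ℝ≥0∞) : Prop :=
  ∀ n : ℕ, bar n ∈ STge 𝓕 (fun _ => grid h n) ∧
    ∀ᵐ ω ∂μ, (μ[fun ω' => U (grid h n) (bar n ω') ω' | 𝓕 (grid h n)]) ω ≤
      X1v μ 𝓕 U (grid h n) ω + ε

/-- `ρ̄²(nh)` is a family of `ε`-optimizers for `Y²_{nh}` (an essential infimum). -/
def IsOptRho2 (μ : Measure Ω) (𝓕 : Filtration ℝ≥0∞ mΩ) (U : ℝ≥0∞ → ℝ≥0∞ → Ω → ℝ)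
    (ε h : ℝ) (bar : ℕ → Ω → ℝ≥0∞) : Prop :=
  ∀ n : ℕ, bar n ∈ STge 𝓕 (fun _ => grid h n) ∧
    ∀ᵐ ω ∂μ, (μ[fun ω' => U (bar n ω') (grid h n) ω' | 𝓕 (grid h n)]) ω ≤
      Y2v μ 𝓕 U (grid h n) ω + ε

/-- `τ̄²(nh)` is a family of `ε`-optimizers for `X²_{nh}` (an essential supremum). -/
def IsOptTau2 (μ : Measure Ω) (𝓕 : Filtration ℝ≥0∞ mΩ) (U : ℝ≥0∞ → ℝ≥0∞ → Ω → ℝ)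
    (ε h : ℝ) (bar : ℕ → Ω → ℝ≥0∞) : Prop :=
  ∀ n : ℕ, bar n ∈ STge 𝓕 (fun _ => grid h n) ∧
    ∀ᵐ ω ∂μ, X2v μ 𝓕 U (grid h n) ω - ε ≤
      (μ[fun ω' => U (grid h n) (bar n ω') ω' | 𝓕 (grid h n)]) ω

/-- The standing assumptions on the filtered probability space: `ℙ` charges every point of the
(countable) `Ω`, the filtration is right continuous (usual conditions; completeness is automatic
since null sets are empty), and `𝓕 = 𝓕_∞ = ⋃_{t<∞} 𝓕_t`. -/
def UsualSetup (μ : Measure Ω) (𝓕 : Filtration ℝ≥0∞ mΩ) : Prop :=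
  (∀ ω : Ω, μ {ω} ≠ 0) ∧
  (∀ t : ℝ≥0∞, (𝓕 t : MeasurableSpace Ω) = ⨅ s ∈ Ioi t, (𝓕 s : MeasurableSpace Ω)) ∧
  ((𝓕 ∞ : MeasurableSpace Ω) = mΩ) ∧
  ((⨆ t ∈ Iio (∞ : ℝ≥0∞), (𝓕 t : MeasurableSpace Ω)) = mΩ)

/-- The standing assumptions on a payoff `U`: boundedness, `𝓕_{s∨t}`-measurability of `U(s,t)`,
and the uniform-continuity modulus `r` (bounded, nondecreasing, `r(0+) = r(0) = 0`).  Note that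
the modulus condition, being imposed on all of `[0,∞]`, encodes that the values at `∞` are the
corresponding limits. -/
def PayoffAssumption (𝓕 : Filtration ℝ≥0∞ mΩ) (U : ℝ≥0∞ → ℝ≥0∞ → Ω → ℝ)
    (r : ℝ≥0∞ → ℝ) : Prop :=
  (∃ M : ℝ, ∀ s t ω, |U s t ω| ≤ M) ∧
  (∀ s t : ℝ≥0∞, Measurable[𝓕 (s ⊔ t)] (U s t)) ∧
  Monotone r ∧ (∀ x, 0 ≤ r x) ∧ (∃ C : ℝ, ∀ x, r x ≤ C) ∧ r 0 = 0 ∧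
  Tendsto r (𝓝[>] (0 : ℝ≥0∞)) (𝓝 (0 : ℝ)) ∧
  (∀ s t s' t' : ℝ≥0∞, ∀ ω, |U s t ω - U s' t' ω| ≤ r (dd s s' + dd t t'))

/-- The values of `U` at `∞` are the limits of the values at finite times. -/
def LimitsAtInfty (U : ℝ≥0∞ → ℝ≥0∞ → Ω → ℝ) : Prop :=
  (∀ s ω, Tendsto (fun b => U s b ω) (𝓝[<] (∞ : ℝ≥0∞)) (𝓝 (U s ∞ ω))) ∧
  (∀ t ω, Tendsto (fun a => U a t ω) (𝓝[<] (∞ : ℝ≥0∞)) (𝓝 (U ∞ t ω))) ∧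
  (∀ ω, Tendsto (fun p : ℝ≥0∞ × ℝ≥0∞ => U p.1 p.2 ω)
    ((𝓝[<] (∞ : ℝ≥0∞)) ×ˢ (𝓝[<] (∞ : ℝ≥0∞))) (𝓝 (U ∞ ∞ ω)))

/-- `ess inf_{σ ∈ 𝒯_v} E[U(s,σ) | 𝓕_v]` for a stopping time `v`. -/
def XatST (μ : Measure Ω) (𝓕 : Filtration ℝ≥0∞ mΩ) (U : ℝ≥0∞ → ℝ≥0∞ → Ω → ℝ)
    {v : Ω → ℝ≥0∞} (hv : IsStoppingTime 𝓕 (fun ω => (v ω : WithTop ℝ≥0∞))) (s : ℝ≥0∞) (ω : Ω) : ℝ :=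
  ⨅ σ : STge 𝓕 v, (μ[fun ω' => U s (σ.1 ω') ω' | hv.measurableSpace]) ω

/-- `X̃_v(s) = ess inf_{σ ∈ 𝒯_v} E[U(s,σ) | 𝓕_v]` for a deterministic time `v`. -/
def Xat (μ : Measure Ω) (𝓕 : Filtration ℝ≥0∞ mΩ) (U : ℝ≥0∞ → ℝ≥0∞ → Ω → ℝ)
    (v s : ℝ≥0∞) (ω : Ω) : ℝ :=
  ⨅ σ : STge 𝓕 (fun _ => v), (μ[fun ω' => U s (σ.1 ω') ω' | 𝓕 v]) ω

/-- `ρ₀* = μ₁ 1_{μ₁ ≤ μ₂} + ρ²_{μ₂+δ} 1_{μ₁ > μ₂}`. -/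
def rhoStar0 (m1 m2 rsad2 : Ω → ℝ≥0∞) : Ω → ℝ≥0∞ := fun ω =>
  if m1 ω ≤ m2 ω then m1 ω else rsad2 ω

/-- `ρ₁*(t) = ρ_h²(t)` if `t ≥ μ₁ ∧ μ₂ + δ` and `μ₁ > μ₂`, else `ρ_h¹(t)`. -/
def rhoStar1 (m1 m2 : Ω → ℝ≥0∞) (δ : ℝ) (φ1 φ2 : ℝ≥0∞ → Ω → ℝ≥0∞) :
    ℝ≥0∞ → Ω → ℝ≥0∞ := fun t ω =>
  if (m1 ω ⊓ m2 ω) + ENNReal.ofReal δ ≤ t ∧ m2 ω < m1 ω then φ2 t ω else φ1 t ω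

/-- `τ₀* = τ¹_{μ₁+δ} 1_{μ₁ ≤ μ₂} + μ₂ 1_{μ₁ > μ₂}`. -/
def tauStar0 (m1 m2 tsad1 : Ω → ℝ≥0∞) : Ω → ℝ≥0∞ := fun ω =>
  if m1 ω ≤ m2 ω then tsad1 ω else m2 ω

/-- `τ₁*(t) = τ_h¹(t)` if `t ≥ μ₁ ∧ μ₂ + δ` and `μ₁ ≤ μ₂`, else `τ_h²(t)`. -/
def tauStar1 (m1 m2 : Ω → ℝ≥0∞) (δ : ℝ) (ψ1 ψ2 : ℝ≥0∞ → Ω → ℝ≥0∞) :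
    ℝ≥0∞ → Ω → ℝ≥0∞ := fun t ω =>
  if (m1 ω ⊓ m2 ω) + ENNReal.ofReal δ ≤ t ∧ m1 ω ≤ m2 ω then ψ1 t ω else ψ2 t ω

set_option linter.unusedSectionVars false
set_option linter.unusedVariables false

/-- The atom of a σ-algebra at a point. -/
def atomOf (m : MeasurableSpace Ω) (ω : Ω) : Set Ω :=
  {x | ∀ A : Set Ω, MeasurableSet[m] A → ω ∈ A → x ∈ A}

lemma mem_atomOf_self (m : MeasurableSpace Ω) (ω : Ω) : ω ∈ atomOf m ω :=
  fun _ _ h => h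

lemma atomOf_subset (m : MeasurableSpace Ω) (ω : Ω) {A : Set Ω}
    (hA : MeasurableSet[m] A) (hω : ω ∈ A) : atomOf m ω ⊆ A :=
  fun _ hx => hx A hA hω

lemma atomOf_anti {m m' : MeasurableSpace Ω} (h : m ≤ m') (ω : Ω) :
    atomOf m' ω ⊆ atomOf m ω :=
  fun _ hx A hA hω => hx A (h A hA) hω

lemma measurableSet_atomOf [Countable Ω] (m : MeasurableSpace Ω) (ω : Ω) :
    MeasurableSet[m] (atomOf m ω) := by
  have hch : ∀ x : {y : Ω // y ∉ atomOf m ω}, ∃ A : Set Ω,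
      MeasurableSet[m] A ∧ ω ∈ A ∧ (x : Ω) ∉ A := by
    rintro ⟨x, hx⟩
    simp only [atomOf, mem_setOf_eq, not_forall] at hx
    obtain ⟨A, hA, hωA, hxA⟩ := hx
    exact ⟨A, hA, hωA, hxA⟩
  choose A hAm hAω hAx using hch
  have : atomOf m ω = ⋂ x, A x := by
    apply Subset.antisymm
    · intro y hy
      exact mem_iInter.2 fun x => hy (A x) (hAm x) (hAω x)
    · intro y hy
      by_contra hyn
      exact hAx ⟨y, hyn⟩ (mem_iInter.1 hy ⟨y, hyn⟩)
  rw [this]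
  exact MeasurableSet.iInter fun x => hAm x

lemma eqOn_atomOf {m : MeasurableSpace Ω} {g : Ω → ℝ} (hg : Measurable[m] g)
    (ω : Ω) : ∀ x ∈ atomOf m ω, g x = g ω := by
  intro x hx
  exact hx (g ⁻¹' {g ω}) (hg (measurableSet_singleton _)) rfl

lemma forall_of_ae {μ : Measure Ω} (hμ : ∀ ω : Ω, μ {ω} ≠ 0) {P : Ω → Prop}
    (h : ∀ᵐ x ∂μ, P x) (ω : Ω) : P ω := by
  by_contra hP
  have h1 : μ {x | ¬ P x} = 0 := h
  have h2 : μ {ω} ≤ μ {x | ¬ P x} := measure_mono (by simpa using hP)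
  exact hμ ω (le_antisymm (h1 ▸ h2) bot_le)

lemma setIntegral_eq_const {μ : Measure Ω} [IsFiniteMeasure μ] {A : Set Ω}
    (hA : MeasurableSet A) {g : Ω → ℝ} {c : ℝ} (h : ∀ x ∈ A, g x = c) :
    ∫ x in A, g x ∂μ = (μ A).toReal * c := by
  rw [setIntegral_congr_fun hA h, setIntegral_const, smul_eq_mul]
  rfl

/-- conditional expectation as an average over the atom -/
lemma condexp_apply_eq {μ : Measure Ω} [IsFiniteMeasure μ] [Countable Ω]
    (hμ : ∀ ω : Ω, μ {ω} ≠ 0)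
    {m : MeasurableSpace Ω} (hm : m ≤ mΩ) {f : Ω → ℝ} (hf : Integrable f μ) (ω : Ω) :
    (μ[f|m]) ω = (∫ x in atomOf m ω, f x ∂μ) / (μ (atomOf m ω)).toReal := by
  set A := atomOf m ω with hA
  have hAm : MeasurableSet[m] A := measurableSet_atomOf m ω
  have hμA0 : μ A ≠ 0 := by
    intro h0
    exact hμ ω (le_antisymm (h0 ▸ measure_mono (singleton_subset_iff.2 (mem_atomOf_self m ω)))
      bot_le)
  have hμAtop : μ A ≠ ∞ := measure_ne_top μ A
  have hb : (0:ℝ) < (μ A).toReal := ENNReal.toReal_pos hμA0 hμAtop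
  have hint : ∫ x in A, (μ[f|m]) x ∂μ = ∫ x in A, f x ∂μ := setIntegral_condExp hm hf hAm
  have hmeas : Measurable[m] (μ[f|m]) := stronglyMeasurable_condExp.measurable
  have hconst : ∀ x ∈ A, (μ[f|m]) x = (μ[f|m]) ω := eqOn_atomOf hmeas ω
  have hAm0 : MeasurableSet[mΩ] A := hm A hAm
  have : ∫ x in A, (μ[f|m]) x ∂μ = (μ A).toReal * (μ[f|m]) ω :=
    @setIntegral_eq_const Ω mΩ μ _ A hAm0 _ _ hconst
  rw [this] at hint
  field_simp [smul_eq_mul] at hint ⊢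
  linarith [hint]

section Bounds
variable {μ : Measure Ω} [IsProbabilityMeasure μ] [Countable Ω]

lemma abs_setIntegral_le {A : Set Ω} {f : Ω → ℝ} (hf : Integrable f μ) {M : ℝ}
    (hM : ∀ x, |f x| ≤ M) : |∫ x in A, f x ∂μ| ≤ M * (μ A).toReal := by
  have := norm_setIntegral_le_of_norm_le_const_ae' (s := A) (μ := μ) (C := M) (f := f)
    (measure_lt_top μ A) (Eventually.of_forall fun x _ => by simpa using hM x)
  simpa [Real.norm_eq_abs, measureReal_def] using this

/-- |E[f|m] ω| ≤ M -/
lemma abs_condexp_le (hμ : ∀ ω : Ω, μ {ω} ≠ 0) {m : MeasurableSpace Ω} (hm : m ≤ mΩ) {f : Ω → ℝ}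
    (hf : Integrable f μ) {M : ℝ} (hM : ∀ x, |f x| ≤ M) (ω : Ω) :
    |(μ[f|m]) ω| ≤ M := by
  rw [condexp_apply_eq (mΩ := mΩ) hμ hm hf ω]
  set A := atomOf m ω
  have hμA0 : μ A ≠ 0 := fun h0 => hμ ω (le_antisymm
    (h0 ▸ measure_mono (singleton_subset_iff.2 (mem_atomOf_self m ω))) bot_le)
  have hb : (0:ℝ) < (μ A).toReal := ENNReal.toReal_pos hμA0 (measure_ne_top μ A)
  rw [abs_div, abs_of_pos hb, div_le_iff₀ hb]
  exact abs_setIntegral_le (mΩ := mΩ) hf hM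

/-- |E[f|m] ω − E[g|m] ω| ≤ c when |f − g| ≤ c pointwise. -/
lemma abs_condexp_sub_condexp_le (hμ : ∀ ω : Ω, μ {ω} ≠ 0) {m : MeasurableSpace Ω} (hm : m ≤ mΩ) {f g : Ω → ℝ}
    (hf : Integrable f μ) (hg : Integrable g μ) {c : ℝ}
    (hc : ∀ x, |f x - g x| ≤ c) (ω : Ω) :
    |(μ[f|m]) ω - (μ[g|m]) ω| ≤ c := by
  rw [condexp_apply_eq (mΩ := mΩ) hμ hm hf ω, condexp_apply_eq (mΩ := mΩ) hμ hm hg ω]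
  set A := atomOf m ω
  have hμA0 : μ A ≠ 0 := fun h0 => hμ ω (le_antisymm
    (h0 ▸ measure_mono (singleton_subset_iff.2 (mem_atomOf_self m ω))) bot_le)
  have hb : (0:ℝ) < (μ A).toReal := ENNReal.toReal_pos hμA0 (measure_ne_top μ A)
  rw [div_sub_div_same, abs_div, abs_of_pos hb, div_le_iff₀ hb]
  have hsub : ∫ x in A, f x ∂μ - ∫ x in A, g x ∂μ = ∫ x in A, (f x - g x) ∂μ :=
    (integral_sub (hf.restrict) (hg.restrict)).symm
  rw [hsub]
  exact abs_setIntegral_le (mΩ := mΩ) (hf.sub hg) (fun x => hc x)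

/-- averages over nested sets -/
lemma abs_avg_sub_avg {A₁ A₂ : Set Ω} (hA₁m : MeasurableSet A₁) (hA₂m : MeasurableSet A₂)
    (hsub : A₁ ⊆ A₂) (hμ10 : μ A₁ ≠ 0) (hμ20 : μ A₂ ≠ 0) {f : Ω → ℝ}
    (hf : Integrable f μ) {M : ℝ} (hM : ∀ x, |f x| ≤ M) :
    |(∫ x in A₁, f x ∂μ) / (μ A₁).toReal - (∫ x in A₂, f x ∂μ) / (μ A₂).toReal| ≤
      2 * M * ((μ A₂).toReal - (μ A₁).toReal) / (μ A₂).toReal := by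
  set a := (μ A₁).toReal with ha
  set b := (μ A₂).toReal with hb
  have ha0 : (0:ℝ) < a := ENNReal.toReal_pos hμ10 (measure_ne_top μ A₁)
  have hb0 : (0:ℝ) < b := ENNReal.toReal_pos hμ20 (measure_ne_top μ A₂)
  have hab : a ≤ b := ENNReal.toReal_mono (measure_ne_top μ A₂) (measure_mono hsub)
  have hM0 : 0 ≤ M := by
    rcases eq_empty_or_nonempty A₁ with h | ⟨x, hx⟩
    · exact absurd (by simp [h]) hμ10
    · exact le_trans (abs_nonneg _) (hM x)
  set I₁ := ∫ x in A₁, f x ∂μ with hI₁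
  set J := ∫ x in A₂ \ A₁, f x ∂μ with hJ
  have hsplit : ∫ x in A₂, f x ∂μ = I₁ + J := by
    have hu : ∫ x in A₁ ∪ A₂ \ A₁, f x ∂μ = I₁ + J :=
      setIntegral_union (disjoint_sdiff_self_right) (hA₂m.diff hA₁m)
        hf.restrict hf.restrict
    rw [union_diff_cancel hsub] at hu
    exact hu
  have hI₁le : |I₁| ≤ M * a := abs_setIntegral_le (mΩ := mΩ) hf hM
  have hJle : |J| ≤ M * (b - a) := by
    have h1 : |J| ≤ M * (μ (A₂ \ A₁)).toReal :=
      abs_setIntegral_le (mΩ := mΩ) (A := A₂ \ A₁) hf hM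
    have hmeq : (μ (A₂ \ A₁)).toReal = b - a := by
      have hd : μ (A₂ \ A₁) = μ A₂ - μ A₁ :=
        measure_diff hsub hA₁m.nullMeasurableSet (measure_ne_top μ A₁)
      rw [hd, ENNReal.toReal_sub_of_le (measure_mono hsub) (measure_ne_top μ A₂)]
    rw [hmeq] at h1
    exact h1
  rw [hsplit]
  have key : I₁ / a - (I₁ + J) / b = I₁ * (b - a) / (a * b) - J / b := by
    field_simp
    ring
  rw [key]
  have h1 : |I₁ * (b - a) / (a * b)| ≤ M * (b - a) / b := by
    rw [abs_div, abs_of_pos (mul_pos ha0 hb0), abs_mul, abs_of_nonneg (by linarith : (0:ℝ) ≤ b - a)]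
    rw [div_le_div_iff₀ (mul_pos ha0 hb0) hb0]
    calc |I₁| * (b - a) * b ≤ (M * a) * (b - a) * b := by
          apply mul_le_mul_of_nonneg_right (mul_le_mul_of_nonneg_right hI₁le (by linarith)) hb0.le
      _ = M * (b - a) * (a * b) := by ring
  have h2 : |J / b| ≤ M * (b - a) / b := by
    rw [abs_div, abs_of_pos hb0]
    gcongr
  calc |I₁ * (b - a) / (a * b) - J / b| ≤ |I₁ * (b - a) / (a * b)| + |J / b| := abs_sub _ _
    _ ≤ M * (b - a) / b + M * (b - a) / b := add_le_add h1 h2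
    _ = 2 * M * (b - a) / b := by ring

/-- Comparison of conditional expectations w.r.t. two σ-algebras, in terms of atom masses. -/
lemma abs_condexp_sub_condexp_two_le (hμ : ∀ ω : Ω, μ {ω} ≠ 0) {m₁ m₂ : MeasurableSpace Ω}
    (hm₁ : m₁ ≤ mΩ) (hm₂ : m₂ ≤ mΩ) (h21 : m₂ ≤ m₁) {f : Ω → ℝ}
    (hf : Integrable f μ) {M : ℝ} (hM : ∀ x, |f x| ≤ M) (ω : Ω) :
    |(μ[f|m₁]) ω - (μ[f|m₂]) ω| ≤
      2 * M * ((μ (atomOf m₂ ω)).toReal - (μ (atomOf m₁ ω)).toReal) /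
        (μ (atomOf m₂ ω)).toReal := by
  rw [condexp_apply_eq (mΩ := mΩ) hμ hm₁ hf ω, condexp_apply_eq (mΩ := mΩ) hμ hm₂ hf ω]
  have hμ10 : μ (atomOf m₁ ω) ≠ 0 := fun h0 => hμ ω (le_antisymm
    (h0 ▸ measure_mono (singleton_subset_iff.2 (mem_atomOf_self m₁ ω))) bot_le)
  have hμ20 : μ (atomOf m₂ ω) ≠ 0 := fun h0 => hμ ω (le_antisymm
    (h0 ▸ measure_mono (singleton_subset_iff.2 (mem_atomOf_self m₂ ω))) bot_le)
  exact abs_avg_sub_avg (mΩ := mΩ) (hm₁ _ (measurableSet_atomOf m₁ ω))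
    (hm₂ _ (measurableSet_atomOf m₂ ω)) (atomOf_anti h21 ω) hμ10 hμ20 hf hM

end Bounds

section Atoms
variable {μ : Measure Ω} [IsProbabilityMeasure μ] [Countable Ω]

/-- right continuity of the filtration gives the atom at `t` as the union of later atoms -/
lemma atomOf_eq_iUnion (𝓕 : Filtration ℝ≥0∞ mΩ)
    (hrc : ∀ t : ℝ≥0∞, (𝓕 t : MeasurableSpace Ω) = ⨅ s ∈ Ioi t, (𝓕 s : MeasurableSpace Ω))
    {t : ℝ≥0∞} (ht : t ≠ ∞) (ω : Ω) :
    atomOf (𝓕 t) ω = ⋃ n : ℕ, atomOf (𝓕 (t + ((n:ℝ≥0∞)+1)⁻¹)) ω := by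
  have hmono : ∀ {u v : ℝ≥0∞}, u ≤ v → atomOf (𝓕 v) ω ⊆ atomOf (𝓕 u) ω :=
    fun {u v} huv => atomOf_anti (𝓕.mono huv) ω
  apply Subset.antisymm
  · -- atom at t ⊆ union: show union is 𝓕 t-measurable and contains ω
    set B := ⋃ n : ℕ, atomOf (𝓕 (t + ((n:ℝ≥0∞)+1)⁻¹)) ω with hB
    have hωB : ω ∈ B := mem_iUnion.2 ⟨0, mem_atomOf_self _ ω⟩
    have hBmeas : MeasurableSet[𝓕 t] B := by
      rw [hrc t]
      rw [MeasurableSpace.measurableSet_iInf]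
      intro s'
      rw [MeasurableSpace.measurableSet_iInf]
      intro hs'
      -- find N with t + (N+1)⁻¹ ≤ s'
      obtain ⟨N, hN⟩ : ∃ N : ℕ, t + ((N:ℝ≥0∞)+1)⁻¹ ≤ s' := by
        have h0 : (0:ℝ≥0∞) < s' - t := tsub_pos_of_lt hs'
        obtain ⟨N, hN⟩ := ENNReal.exists_inv_nat_lt h0.ne'
        refine ⟨N, ?_⟩
        have h1 : ((N:ℝ≥0∞)+1)⁻¹ ≤ ((N:ℝ≥0∞))⁻¹ :=
          ENNReal.inv_le_inv.2 le_self_add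
        calc t + ((N:ℝ≥0∞)+1)⁻¹ ≤ t + (N:ℝ≥0∞)⁻¹ := add_le_add_right h1 t
          _ ≤ t + (s' - t) := add_le_add_right hN.le t
          _ = s' := by rw [add_comm, tsub_add_cancel_of_le hs'.le]
      -- B equals the union over n ≥ N, each measurable in 𝓕 s'
      have hBeq : B = ⋃ n : ℕ, atomOf (𝓕 (t + (((N+n : ℕ):ℝ≥0∞)+1)⁻¹)) ω := by
        apply Subset.antisymm
        · refine iUnion_subset fun n => ?_
          refine subset_iUnion_of_subset n (hmono (add_le_add_right (ENNReal.inv_le_inv.2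
            (by exact_mod_cast Nat.succ_le_succ (Nat.le_add_left n N))) t))
        · refine iUnion_subset fun n => subset_iUnion_of_subset (N+n) (by rfl)
      rw [hBeq]
      refine MeasurableSet.iUnion fun n => ?_
      have hle : t + (((N+n : ℕ):ℝ≥0∞)+1)⁻¹ ≤ s' := le_trans
        (add_le_add_right (ENNReal.inv_le_inv.2
          (by exact_mod_cast Nat.succ_le_succ (Nat.le_add_right N n))) t) hN
      exact 𝓕.mono hle _ (measurableSet_atomOf _ ω)
    exact atomOf_subset (𝓕 t) ω hBmeas hωB
  · exact iUnion_subset fun n => hmono le_self_add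

/-- the atom masses converge from the right -/
lemma atom_mass_conv (𝓕 : Filtration ℝ≥0∞ mΩ) (hμ : ∀ ω : Ω, μ {ω} ≠ 0)
    (hrc : ∀ t : ℝ≥0∞, (𝓕 t : MeasurableSpace Ω) = ⨅ s ∈ Ioi t, (𝓕 s : MeasurableSpace Ω))
    {t : ℝ≥0∞} (ht : t ≠ ∞) (ω : Ω) {ε : ℝ} (hε : 0 < ε) :
    ∃ s₁ : ℝ≥0∞, t < s₁ ∧ ∀ s, t < s → s ≤ s₁ →
      (μ (atomOf (𝓕 t) ω)).toReal - (μ (atomOf (𝓕 s) ω)).toReal < ε := by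
  set c := μ (atomOf (𝓕 t) ω) with hc
  have hcsup : c = ⨆ n : ℕ, μ (atomOf (𝓕 (t + ((n:ℝ≥0∞)+1)⁻¹)) ω) := by
    rw [hc, atomOf_eq_iUnion 𝓕 hrc ht ω]
    refine Directed.measure_iUnion ?_
    intro m n
    refine ⟨m ⊔ n, atomOf_anti (𝓕.mono (add_le_add_right (ENNReal.inv_le_inv.2
        (by exact_mod_cast Nat.succ_le_succ (le_sup_left : m ≤ m ⊔ n))) t)) ω,
      atomOf_anti (𝓕.mono (add_le_add_right (ENNReal.inv_le_inv.2
        (by exact_mod_cast Nat.succ_le_succ (le_sup_right : n ≤ m ⊔ n))) t)) ω⟩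
  have hcne : c ≠ ∞ := measure_ne_top μ _
  -- find n with c.toReal - ε < mass at step n
  obtain ⟨n, hn⟩ : ∃ n : ℕ, c.toReal - ε < (μ (atomOf (𝓕 (t + ((n:ℝ≥0∞)+1)⁻¹)) ω)).toReal := by
    by_contra hcon
    push_neg at hcon
    have hle : ∀ n : ℕ, μ (atomOf (𝓕 (t + ((n:ℝ≥0∞)+1)⁻¹)) ω) ≤ ENNReal.ofReal (c.toReal - ε) := by
      intro n
      have := hcon n
      rw [← ENNReal.ofReal_toReal (measure_ne_top μ (atomOf (𝓕 (t + ((n:ℝ≥0∞)+1)⁻¹)) ω))]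
      exact ENNReal.ofReal_le_ofReal this
    have : c ≤ ENNReal.ofReal (c.toReal - ε) :=
      le_trans (le_of_eq hcsup) (iSup_le hle)
    have hc0 : c ≠ 0 := fun h0 => hμ ω (le_antisymm
      (h0 ▸ measure_mono (singleton_subset_iff.2 (mem_atomOf_self _ ω))) bot_le)
    have hcpos : 0 < c.toReal := ENNReal.toReal_pos hc0 hcne
    have h2 : (ENNReal.ofReal (c.toReal - ε)).toReal < c.toReal := by
      rcases le_or_gt (c.toReal - ε) 0 with h | h
      · rw [ENNReal.ofReal_eq_zero.2 h]
        simpa using hcpos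
      · rw [ENNReal.toReal_ofReal h.le]
        linarith
    exact absurd (ENNReal.toReal_mono ENNReal.ofReal_ne_top this) (not_le.2 h2)
  refine ⟨t + ((n:ℝ≥0∞)+1)⁻¹, ?_, ?_⟩
  · exact ENNReal.lt_add_right ht (by simp)
  · intro s hts hs1
    have hsub : atomOf (𝓕 (t + ((n:ℝ≥0∞)+1)⁻¹)) ω ⊆ atomOf (𝓕 s) ω :=
      atomOf_anti (𝓕.mono hs1) ω
    have h1 : (μ (atomOf (𝓕 (t + ((n:ℝ≥0∞)+1)⁻¹)) ω)).toReal ≤ (μ (atomOf (𝓕 s) ω)).toReal :=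
      ENNReal.toReal_mono (measure_ne_top μ _) (measure_mono hsub)
    linarith

end Atoms

section InfSup

lemma abs_ciInf_sub_ciInf {ι : Sort*} [Nonempty ι] {F G : ι → ℝ} {c : ℝ}
    (hF : BddBelow (Set.range F)) (hG : BddBelow (Set.range G))
    (h : ∀ i, |F i - G i| ≤ c) : |(⨅ i, F i) - ⨅ i, G i| ≤ c := by
  have h1 : (⨅ i, F i) - c ≤ ⨅ i, G i :=
    le_ciInf fun i => by
      have h2 := ciInf_le hF i
      have h3 := abs_le.1 (h i)
      obtain ⟨h4, h5⟩ := h3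
      linarith
  have h2 : (⨅ i, G i) - c ≤ ⨅ i, F i :=
    le_ciInf fun i => by
      have h2 := ciInf_le hG i
      have h3 := abs_le.1 (h i)
      obtain ⟨h4, h5⟩ := h3
      linarith
  rw [abs_le]
  constructor <;> linarith

lemma abs_ciSup_sub_ciSup {ι : Sort*} [Nonempty ι] {F G : ι → ℝ} {c : ℝ}
    (hF : BddAbove (Set.range F)) (hG : BddAbove (Set.range G))
    (h : ∀ i, |F i - G i| ≤ c) : |(⨆ i, F i) - ⨆ i, G i| ≤ c := by
  have h1 : (⨆ i, F i) ≤ (⨆ i, G i) + c :=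
    ciSup_le fun i => by
      have h2 := le_ciSup hG i
      have h3 := abs_le.1 (h i)
      obtain ⟨h4, h5⟩ := h3
      linarith
  have h2 : (⨆ i, G i) ≤ (⨆ i, F i) + c :=
    ciSup_le fun i => by
      have h2 := le_ciSup hF i
      have h3 := abs_le.1 (h i)
      obtain ⟨h4, h5⟩ := h3
      linarith
  rw [abs_le]
  constructor <;> linarith

end InfSup

section Core
variable {μ : Measure Ω} [IsProbabilityMeasure μ] [Countable Ω] {𝓕 : Filtration ℝ≥0∞ mΩ}
  {U : ℝ≥0∞ → ℝ≥0∞ → Ω → ℝ} {r : ℝ≥0∞ → ℝ} {M : ℝ}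

lemma dd_self (a : ℝ≥0∞) : dd a a = 0 := by simp [dd]

lemma dd_of_le {a b : ℝ≥0∞} (h : b ≤ a) : dd a b = a - b := by
  simp [dd, tsub_eq_zero_of_le h]

lemma dd_sup_le {a s t : ℝ≥0∞} (hta : t ≤ a) : dd (a ⊔ s) a ≤ s - t := by
  rw [dd_of_le le_sup_left]
  rcases le_total s a with h | h
  · simp [sup_eq_left.2 h]
  · rw [sup_eq_right.2 h]
    exact tsub_le_tsub_left hta s

lemma nonempty_STge (𝓕 : Filtration ℝ≥0∞ mΩ) (v : Ω → ℝ≥0∞) :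
    Nonempty (STge 𝓕 v) :=
  ⟨⟨fun _ => ∞, isStoppingTime_const 𝓕 ∞, fun _ => le_top⟩⟩

lemma measurable_comp_eval {G : ℝ≥0∞ → Ω → ℝ} (hG : ∀ a, Measurable (G a))
    {σ : Ω → ℝ≥0∞} (hσ : Measurable σ) : Measurable fun ω => G (σ ω) ω := by
  intro B hB
  have hpre : (fun ω => G (σ ω) ω) ⁻¹' B = ⋃ a ∈ Set.range σ, (σ ⁻¹' {a} ∩ G a ⁻¹' B) := by
    ext x
    simp only [mem_preimage, mem_iUnion, mem_inter_iff, mem_singleton_iff, Set.mem_range,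
      exists_prop, exists_and_left]
    constructor
    · intro hx
      exact ⟨σ x, ⟨x, rfl⟩, rfl, hx⟩
    · rintro ⟨a, _, rfl, hx⟩
      exact hx
  rw [hpre]
  exact MeasurableSet.biUnion (Set.countable_range σ)
    fun a _ => (hσ (measurableSet_singleton a)).inter (hG a hB)

lemma integrable_comp_eval (hM : ∀ s u ω, |U s u ω| ≤ M)
    (hmeas : ∀ s u : ℝ≥0∞, Measurable[𝓕 (s ⊔ u)] (U s u))
    {σ : Ω → ℝ≥0∞} (hσ : Measurable σ) (s : ℝ≥0∞) :
    Integrable (fun ω' => U s (σ ω') ω') μ ∧ Integrable (fun ω' => U (σ ω') s ω') μ := by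
  have hUm : ∀ a u : ℝ≥0∞, Measurable (U a u) :=
    fun a u => (hmeas a u).mono (𝓕.le _) le_rfl
  constructor
  · refine (integrable_const M).mono'
      ((measurable_comp_eval (fun a => hUm s a) hσ).aestronglyMeasurable) ?_
    exact Eventually.of_forall fun x => by simpa [Real.norm_eq_abs] using hM s (σ x) x
  · refine (integrable_const M).mono'
      ((measurable_comp_eval (fun a => hUm a s) hσ).aestronglyMeasurable) ?_
    exact Eventually.of_forall fun x => by simpa [Real.norm_eq_abs] using hM (σ x) s x

/-- The core quantitative estimate for `X`. -/
lemma X1v_estimate (hμ : ∀ ω : Ω, μ {ω} ≠ 0)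
    (hM : ∀ s u ω, |U s u ω| ≤ M)
    (hmeas : ∀ s u : ℝ≥0∞, Measurable[𝓕 (s ⊔ u)] (U s u))
    (hrmono : Monotone r) (hrnn : ∀ x, 0 ≤ r x)
    (hmod : ∀ s u s' u' : ℝ≥0∞, ∀ ω, |U s u ω - U s' u' ω| ≤ r (dd s s' + dd u u'))
    {t s : ℝ≥0∞} (hts : t ≤ s) (ω : Ω) :
    |X1v μ 𝓕 U s ω - X1v μ 𝓕 U t ω| ≤ 2 * r (s - t) +
      2 * M * ((μ (atomOf (𝓕 t) ω)).toReal - (μ (atomOf (𝓕 s) ω)).toReal) /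
        (μ (atomOf (𝓕 t) ω)).toReal := by
  haveI hTs : Nonempty (STge 𝓕 (fun _ => s)) := nonempty_STge 𝓕 _
  haveI hTt : Nonempty (STge 𝓕 (fun _ => t)) := nonempty_STge 𝓕 _
  have hstm : ∀ σ : STge 𝓕 (fun _ => (s:ℝ≥0∞)), Measurable σ.1 :=
    fun σ => by simpa using σ.2.1.measurable'.untopD (0:ℝ≥0∞)
  have httm : ∀ σ : STge 𝓕 (fun _ => (t:ℝ≥0∞)), Measurable σ.1 :=
    fun σ => by simpa using σ.2.1.measurable'.untopD (0:ℝ≥0∞)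
  set E1 : STge 𝓕 (fun _ => s) → ℝ :=
    fun σ => (μ[fun ω' => U s (σ.1 ω') ω' | 𝓕 s]) ω with hE1
  set E2 : STge 𝓕 (fun _ => s) → ℝ :=
    fun σ => (μ[fun ω' => U t (σ.1 ω') ω' | 𝓕 s]) ω with hE2
  set E3 : STge 𝓕 (fun _ => t) → ℝ :=
    fun σ => (μ[fun ω' => U t (σ.1 ω') ω' | 𝓕 s]) ω with hE3
  set E4 : STge 𝓕 (fun _ => t) → ℝ :=
    fun σ => (μ[fun ω' => U t (σ.1 ω') ω' | 𝓕 t]) ω with hE4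
  -- integrability
  have hint1 : ∀ σ : STge 𝓕 (fun _ => (s:ℝ≥0∞)), ∀ a : ℝ≥0∞,
      Integrable (fun ω' => U a (σ.1 ω') ω') μ :=
    fun σ a => (integrable_comp_eval hM hmeas (hstm σ) a).1
  have hint2 : ∀ σ : STge 𝓕 (fun _ => (t:ℝ≥0∞)), ∀ a : ℝ≥0∞,
      Integrable (fun ω' => U a (σ.1 ω') ω') μ :=
    fun σ a => (integrable_comp_eval hM hmeas (httm σ) a).1
  -- uniform bounds : |Ei| ≤ M
  have hbd1 : ∀ σ, |E1 σ| ≤ M := fun σ =>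
    abs_condexp_le (mΩ := mΩ) hμ (𝓕.le s) (hint1 σ s) (fun x => hM s (σ.1 x) x) ω
  have hbd2 : ∀ σ, |E2 σ| ≤ M := fun σ =>
    abs_condexp_le (mΩ := mΩ) hμ (𝓕.le s) (hint1 σ t) (fun x => hM t (σ.1 x) x) ω
  have hbd3 : ∀ σ, |E3 σ| ≤ M := fun σ =>
    abs_condexp_le (mΩ := mΩ) hμ (𝓕.le s) (hint2 σ t) (fun x => hM t (σ.1 x) x) ω
  have hbd4 : ∀ σ, |E4 σ| ≤ M := fun σ =>
    abs_condexp_le (mΩ := mΩ) hμ (𝓕.le t) (hint2 σ t) (fun x => hM t (σ.1 x) x) ω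
  have bb : ∀ {ι : Type _} (F : ι → ℝ), (∀ i, |F i| ≤ M) → BddBelow (Set.range F) := by
    intro ι F hF
    refine ⟨-M, ?_⟩
    rintro x ⟨i, rfl⟩
    exact (abs_le.1 (hF i)).1
  -- step 1 : |⨅E1 - ⨅E2| ≤ r (s - t)
  have hstep1 : |(⨅ σ, E1 σ) - ⨅ σ, E2 σ| ≤ r (s - t) := by
    refine abs_ciInf_sub_ciInf (bb E1 hbd1) (bb E2 hbd2) fun σ => ?_
    refine abs_condexp_sub_condexp_le (mΩ := mΩ) hμ (𝓕.le s) (hint1 σ s) (hint1 σ t)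
      (fun x => ?_) ω
    have h := hmod s (σ.1 x) t (σ.1 x) x
    rwa [dd_self, add_zero, dd_of_le hts] at h
  -- step 2 : |⨅E2 - ⨅E3| ≤ r (s - t)
  have hstep2 : |(⨅ σ, E2 σ) - ⨅ σ, E3 σ| ≤ r (s - t) := by
    set incl : STge 𝓕 (fun _ => (s:ℝ≥0∞)) → STge 𝓕 (fun _ => (t:ℝ≥0∞)) :=
      fun σ => ⟨σ.1, σ.2.1, fun x => le_trans hts (σ.2.2 x)⟩ with hincl
    set jmap : STge 𝓕 (fun _ => (t:ℝ≥0∞)) → STge 𝓕 (fun _ => (s:ℝ≥0∞)) :=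
      fun σ => ⟨fun x => σ.1 x ⊔ s, by simpa using σ.2.1.max_const s, fun x => le_sup_right⟩ with hjmap
    have h2a : (⨅ σ, E3 σ) ≤ ⨅ σ, E2 σ := by
      refine le_ciInf fun σ => ?_
      have : E3 (incl σ) = E2 σ := rfl
      exact this ▸ ciInf_le (bb E3 hbd3) (incl σ)
    have h2b : (⨅ σ, E2 σ) - r (s - t) ≤ ⨅ σ, E3 σ := by
      refine le_ciInf fun σ => ?_
      have hdiff : |E2 (jmap σ) - E3 σ| ≤ r (s - t) := by
        refine abs_condexp_sub_condexp_le (mΩ := mΩ) hμ (𝓕.le s)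
          (hint1 (jmap σ) t) (hint2 σ t) (fun x => ?_) ω
        have h := hmod t (σ.1 x ⊔ s) t (σ.1 x) x
        rw [dd_self, zero_add] at h
        exact le_trans h (hrmono (dd_sup_le (σ.2.2 x)))
      have hle : (⨅ σ, E2 σ) ≤ E2 (jmap σ) := ciInf_le (bb E2 hbd2) (jmap σ)
      have := (abs_le.1 hdiff).2
      linarith
    have hr0 : 0 ≤ r (s - t) := hrnn _
    rw [abs_le]
    constructor <;> linarith
  -- step 3 : two σ-algebras
  have hstep3 : |(⨅ σ, E3 σ) - ⨅ σ, E4 σ| ≤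
      2 * M * ((μ (atomOf (𝓕 t) ω)).toReal - (μ (atomOf (𝓕 s) ω)).toReal) /
        (μ (atomOf (𝓕 t) ω)).toReal := by
    refine abs_ciInf_sub_ciInf (bb E3 hbd3) (bb E4 hbd4) fun σ => ?_
    exact abs_condexp_sub_condexp_two_le (mΩ := mΩ) hμ (𝓕.le s) (𝓕.le t) (𝓕.mono hts)
      (hint2 σ t) (fun x => hM t (σ.1 x) x) ω
  have hX1 : X1v μ 𝓕 U s ω = ⨅ σ, E1 σ := rfl
  have hX2 : X1v μ 𝓕 U t ω = ⨅ σ, E4 σ := rfl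
  rw [hX1, hX2]
  calc |(⨅ σ, E1 σ) - ⨅ σ, E4 σ|
      ≤ |(⨅ σ, E1 σ) - ⨅ σ, E2 σ| + |(⨅ σ, E2 σ) - ⨅ σ, E3 σ| + |(⨅ σ, E3 σ) - ⨅ σ, E4 σ| := by
        have := abs_sub_abs_le_abs_sub ((⨅ σ, E1 σ) - ⨅ σ, E3 σ) 0
        calc |(⨅ σ, E1 σ) - ⨅ σ, E4 σ|
            ≤ |(⨅ σ, E1 σ) - ⨅ σ, E3 σ| + |(⨅ σ, E3 σ) - ⨅ σ, E4 σ| := abs_sub_le _ _ _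
          _ ≤ |(⨅ σ, E1 σ) - ⨅ σ, E2 σ| + |(⨅ σ, E2 σ) - ⨅ σ, E3 σ|
              + |(⨅ σ, E3 σ) - ⨅ σ, E4 σ| := by
            have := abs_sub_le (⨅ σ, E1 σ) (⨅ σ, E2 σ) (⨅ σ, E3 σ)
            linarith
    _ ≤ 2 * r (s - t) +
        2 * M * ((μ (atomOf (𝓕 t) ω)).toReal - (μ (atomOf (𝓕 s) ω)).toReal) /
          (μ (atomOf (𝓕 t) ω)).toReal := by linarith

/-- The core quantitative estimate for `Y`. -/
lemma Y1v_estimate (hμ : ∀ ω : Ω, μ {ω} ≠ 0)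
    (hM : ∀ s u ω, |U s u ω| ≤ M)
    (hmeas : ∀ s u : ℝ≥0∞, Measurable[𝓕 (s ⊔ u)] (U s u))
    (hrmono : Monotone r) (hrnn : ∀ x, 0 ≤ r x)
    (hmod : ∀ s u s' u' : ℝ≥0∞, ∀ ω, |U s u ω - U s' u' ω| ≤ r (dd s s' + dd u u'))
    {t s : ℝ≥0∞} (hts : t ≤ s) (ω : Ω) :
    |Y1v μ 𝓕 U s ω - Y1v μ 𝓕 U t ω| ≤ 2 * r (s - t) +
      2 * M * ((μ (atomOf (𝓕 t) ω)).toReal - (μ (atomOf (𝓕 s) ω)).toReal) /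
        (μ (atomOf (𝓕 t) ω)).toReal := by
  haveI hTs : Nonempty (STge 𝓕 (fun _ => s)) := nonempty_STge 𝓕 _
  haveI hTt : Nonempty (STge 𝓕 (fun _ => t)) := nonempty_STge 𝓕 _
  have hstm : ∀ σ : STge 𝓕 (fun _ => (s:ℝ≥0∞)), Measurable σ.1 :=
    fun σ => by simpa using σ.2.1.measurable'.untopD (0:ℝ≥0∞)
  have httm : ∀ σ : STge 𝓕 (fun _ => (t:ℝ≥0∞)), Measurable σ.1 :=
    fun σ => by simpa using σ.2.1.measurable'.untopD (0:ℝ≥0∞)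
  set E1 : STge 𝓕 (fun _ => s) → ℝ :=
    fun σ => (μ[fun ω' => U (σ.1 ω') s ω' | 𝓕 s]) ω with hE1
  set E2 : STge 𝓕 (fun _ => s) → ℝ :=
    fun σ => (μ[fun ω' => U (σ.1 ω') t ω' | 𝓕 s]) ω with hE2
  set E3 : STge 𝓕 (fun _ => t) → ℝ :=
    fun σ => (μ[fun ω' => U (σ.1 ω') t ω' | 𝓕 s]) ω with hE3
  set E4 : STge 𝓕 (fun _ => t) → ℝ :=
    fun σ => (μ[fun ω' => U (σ.1 ω') t ω' | 𝓕 t]) ω with hE4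
  have hint1 : ∀ σ : STge 𝓕 (fun _ => (s:ℝ≥0∞)), ∀ a : ℝ≥0∞,
      Integrable (fun ω' => U (σ.1 ω') a ω') μ :=
    fun σ a => (integrable_comp_eval hM hmeas (hstm σ) a).2
  have hint2 : ∀ σ : STge 𝓕 (fun _ => (t:ℝ≥0∞)), ∀ a : ℝ≥0∞,
      Integrable (fun ω' => U (σ.1 ω') a ω') μ :=
    fun σ a => (integrable_comp_eval hM hmeas (httm σ) a).2
  have hbd1 : ∀ σ, |E1 σ| ≤ M := fun σ =>
    abs_condexp_le (mΩ := mΩ) hμ (𝓕.le s) (hint1 σ s) (fun x => hM (σ.1 x) s x) ω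
  have hbd2 : ∀ σ, |E2 σ| ≤ M := fun σ =>
    abs_condexp_le (mΩ := mΩ) hμ (𝓕.le s) (hint1 σ t) (fun x => hM (σ.1 x) t x) ω
  have hbd3 : ∀ σ, |E3 σ| ≤ M := fun σ =>
    abs_condexp_le (mΩ := mΩ) hμ (𝓕.le s) (hint2 σ t) (fun x => hM (σ.1 x) t x) ω
  have hbd4 : ∀ σ, |E4 σ| ≤ M := fun σ =>
    abs_condexp_le (mΩ := mΩ) hμ (𝓕.le t) (hint2 σ t) (fun x => hM (σ.1 x) t x) ω
  have bb : ∀ {ι : Type _} (F : ι → ℝ), (∀ i, |F i| ≤ M) → BddAbove (Set.range F) := by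
    intro ι F hF
    refine ⟨M, ?_⟩
    rintro x ⟨i, rfl⟩
    exact (abs_le.1 (hF i)).2
  have hstep1 : |(⨆ σ, E1 σ) - ⨆ σ, E2 σ| ≤ r (s - t) := by
    refine abs_ciSup_sub_ciSup (bb E1 hbd1) (bb E2 hbd2) fun σ => ?_
    refine abs_condexp_sub_condexp_le (mΩ := mΩ) hμ (𝓕.le s) (hint1 σ s) (hint1 σ t)
      (fun x => ?_) ω
    have h := hmod (σ.1 x) s (σ.1 x) t x
    rwa [dd_self, zero_add, dd_of_le hts] at h
  have hstep2 : |(⨆ σ, E2 σ) - ⨆ σ, E3 σ| ≤ r (s - t) := by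
    set incl : STge 𝓕 (fun _ => (s:ℝ≥0∞)) → STge 𝓕 (fun _ => (t:ℝ≥0∞)) :=
      fun σ => ⟨σ.1, σ.2.1, fun x => le_trans hts (σ.2.2 x)⟩ with hincl
    set jmap : STge 𝓕 (fun _ => (t:ℝ≥0∞)) → STge 𝓕 (fun _ => (s:ℝ≥0∞)) :=
      fun σ => ⟨fun x => σ.1 x ⊔ s, by simpa using σ.2.1.max_const s, fun x => le_sup_right⟩ with hjmap
    have h2a : (⨆ σ, E2 σ) ≤ ⨆ σ, E3 σ := by
      refine ciSup_le fun σ => ?_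
      have : E3 (incl σ) = E2 σ := rfl
      exact this ▸ le_ciSup (bb E3 hbd3) (incl σ)
    have h2b : (⨆ σ, E3 σ) ≤ (⨆ σ, E2 σ) + r (s - t) := by
      refine ciSup_le fun σ => ?_
      have hdiff : |E2 (jmap σ) - E3 σ| ≤ r (s - t) := by
        refine abs_condexp_sub_condexp_le (mΩ := mΩ) hμ (𝓕.le s)
          (hint1 (jmap σ) t) (hint2 σ t) (fun x => ?_) ω
        have h := hmod (σ.1 x ⊔ s) t (σ.1 x) t x
        rw [dd_self, add_zero] at h
        exact le_trans h (hrmono (dd_sup_le (σ.2.2 x)))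
      have hle : E2 (jmap σ) ≤ ⨆ σ, E2 σ := le_ciSup (bb E2 hbd2) (jmap σ)
      have := (abs_le.1 hdiff).1
      linarith
    have hr0 : 0 ≤ r (s - t) := hrnn _
    rw [abs_le]
    constructor <;> linarith
  have hstep3 : |(⨆ σ, E3 σ) - ⨆ σ, E4 σ| ≤
      2 * M * ((μ (atomOf (𝓕 t) ω)).toReal - (μ (atomOf (𝓕 s) ω)).toReal) /
        (μ (atomOf (𝓕 t) ω)).toReal := by
    refine abs_ciSup_sub_ciSup (bb E3 hbd3) (bb E4 hbd4) fun σ => ?_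
    exact abs_condexp_sub_condexp_two_le (mΩ := mΩ) hμ (𝓕.le s) (𝓕.le t) (𝓕.mono hts)
      (hint2 σ t) (fun x => hM (σ.1 x) t x) ω
  have hY1 : Y1v μ 𝓕 U s ω = ⨆ σ, E1 σ := rfl
  have hY2 : Y1v μ 𝓕 U t ω = ⨆ σ, E4 σ := rfl
  rw [hY1, hY2]
  calc |(⨆ σ, E1 σ) - ⨆ σ, E4 σ|
      ≤ |(⨆ σ, E1 σ) - ⨆ σ, E3 σ| + |(⨆ σ, E3 σ) - ⨆ σ, E4 σ| := abs_sub_le _ _ _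
    _ ≤ |(⨆ σ, E1 σ) - ⨆ σ, E2 σ| + |(⨆ σ, E2 σ) - ⨆ σ, E3 σ|
        + |(⨆ σ, E3 σ) - ⨆ σ, E4 σ| := by
          have := abs_sub_le (⨆ σ, E1 σ) (⨆ σ, E2 σ) (⨆ σ, E3 σ)
          linarith
    _ ≤ 2 * r (s - t) +
        2 * M * ((μ (atomOf (𝓕 t) ω)).toReal - (μ (atomOf (𝓕 s) ω)).toReal) /
          (μ (atomOf (𝓕 t) ω)).toReal := by linarith

end Core

section Main
variable {μ : Measure Ω} [IsProbabilityMeasure μ] [Countable Ω] {𝓕 : Filtration ℝ≥0∞ mΩ}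
  {r : ℝ≥0∞ → ℝ} {M : ℝ}

lemma continuousWithinAt_of_estimate (hμ : ∀ ω : Ω, μ {ω} ≠ 0)
    (hrc : ∀ t : ℝ≥0∞, (𝓕 t : MeasurableSpace Ω) = ⨅ s ∈ Ioi t, (𝓕 s : MeasurableSpace Ω))
    (hrmono : Monotone r) (hrnn : ∀ x, 0 ≤ r x)
    (hrtend : Tendsto r (𝓝[>] (0 : ℝ≥0∞)) (𝓝 (0 : ℝ)))
    (hM0 : 0 ≤ M) {t : ℝ≥0∞} (ht : t ≠ ∞) {g : ℝ≥0∞ → ℝ} (ω : Ω)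
    (hest : ∀ s, t ≤ s → |g s - g t| ≤ 2 * r (s - t) +
      2 * M * ((μ (atomOf (𝓕 t) ω)).toReal - (μ (atomOf (𝓕 s) ω)).toReal) /
        (μ (atomOf (𝓕 t) ω)).toReal) :
    ContinuousWithinAt g (Ici t) t := by
  set b := (μ (atomOf (𝓕 t) ω)).toReal with hbdef
  have hb0 : 0 < b := ENNReal.toReal_pos
    (fun h0 => hμ ω (le_antisymm
      (h0 ▸ measure_mono (singleton_subset_iff.2 (mem_atomOf_self _ ω))) bot_le))
    (measure_ne_top μ _)
  rw [ContinuousWithinAt, Metric.tendsto_nhds]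
  intro ε hε
  have h3 : 0 < ε / 3 := by linarith
  -- control the modulus term
  have hev1 : ∀ᶠ x in 𝓝[>] (0:ℝ≥0∞), r x < ε / 3 := by
    have : Iio (ε/3) ∈ 𝓝 (0:ℝ) := Iio_mem_nhds h3
    exact hrtend this
  obtain ⟨x₀, hx₀r, hx₀pos⟩ := (hev1.and self_mem_nhdsWithin).exists
  -- control the atom term
  have hMb : 0 < ε * b / (6 * (M + 1)) := by positivity
  obtain ⟨s₁, hts₁, hconv⟩ := atom_mass_conv (μ := μ) 𝓕 hμ hrc ht ω hMb
  -- the eventual right-neighbourhood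
  set u := s₁ ⊓ (t + x₀) with hu
  have htu : t < u := lt_min hts₁ (ENNReal.lt_add_right ht (ne_of_gt hx₀pos))
  have hmem : Ico t u ∈ 𝓝[Ici t] t := by
    have : Ici t ∩ Iio u ∈ 𝓝[Ici t] t := inter_mem_nhdsWithin (Ici t) (Iio_mem_nhds htu)
    rwa [Ici_inter_Iio] at this
  filter_upwards [hmem] with s hs
  obtain ⟨hts, hsu⟩ := hs
  rw [Real.dist_eq]
  have hbound := hest s hts
  -- r term
  have hrsmall : r (s - t) < ε / 3 := by
    have hst : s - t ≤ x₀ := by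
      have h1 : s < t + x₀ := lt_of_lt_of_le hsu inf_le_right
      exact le_of_lt (by
        rw [ENNReal.sub_lt_iff_lt_right ht hts]
        rwa [add_comm])
    exact lt_of_le_of_lt (hrmono hst) hx₀r
  -- atom term
  have hΔ0 : 0 ≤ b - (μ (atomOf (𝓕 s) ω)).toReal := by
    have : (μ (atomOf (𝓕 s) ω)).toReal ≤ b :=
      ENNReal.toReal_mono (measure_ne_top μ _) (measure_mono (atomOf_anti (𝓕.mono hts) ω))
    linarith
  have hatom : 2 * M * (b - (μ (atomOf (𝓕 s) ω)).toReal) / b < ε / 3 := by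
    rcases eq_or_lt_of_le hts with h | h
    · rw [← h]
      simp only [← hbdef, sub_self]
      rw [mul_zero, zero_div]
      linarith
    · have hΔ : b - (μ (atomOf (𝓕 s) ω)).toReal < ε * b / (6 * (M + 1)) :=
        hconv s h (le_trans hsu.le inf_le_left)
      rw [div_lt_iff₀ hb0]
      rw [lt_div_iff₀ (by linarith : (0:ℝ) < 6 * (M + 1))] at hΔ
      nlinarith

  linarith [hbound, hrsmall, hatom]

end Main

/-- Lemma 3.1: the processes `X` and `Y` are (pathwise) right continuous at
every `t ∈ [0,∞)`. -/
theorem X_Y_rightContinuous [Countable Ω] (μ : Measure Ω) [IsProbabilityMeasure μ]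
    (𝓕 : Filtration ℝ≥0∞ mΩ) (hsetup : UsualSetup μ 𝓕)
    (U : ℝ≥0∞ → ℝ≥0∞ → Ω → ℝ) (r : ℝ≥0∞ → ℝ) (hU : PayoffAssumption 𝓕 U r) :
    ∀ ω : Ω, ∀ t : ℝ≥0∞, t ≠ ∞ →
      ContinuousWithinAt (fun s => X1v μ 𝓕 U s ω) (Ici t) t ∧
      ContinuousWithinAt (fun s => Y1v μ 𝓕 U s ω) (Ici t) t := by
  obtain ⟨hcharge, hrc, -, -⟩ := hsetup
  obtain ⟨⟨M, hM⟩, hmeas, hrmono, hrnn, -, -, hrtend, hmod⟩ := hU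
  intro ω t ht
  have hM0 : 0 ≤ M := le_trans (abs_nonneg _) (hM 0 0 ω)
  constructor
  · exact continuousWithinAt_of_estimate hcharge hrc hrmono hrnn hrtend hM0 ht ω
      (fun s hts => X1v_estimate hcharge hM hmeas hrmono hrnn hmod hts ω)
  · exact continuousWithinAt_of_estimate hcharge hrc hrmono hrnn hrtend hM0 ht ω
      (fun s hts => Y1v_estimate hcharge hM hmeas hrmono hrnn hmod hts ω)

end StoppingGames
end
end

section
/- For every stopping time v ∈ 𝒯 and all s, s' ∈ [0,∞], one has |ess inf_{σ∈𝒯_v} E[U(s,σ) | 𝓕_v] − ess inf_{σ∈𝒯_v} E[U(s',σ) | 𝓕_v]| ≤ r(|s − s'|) almost surely; in particular, with t_n ↘ t and |t_n − t| < 1/n, setting X_v(s) := ess inf_{σ∈𝒯_v} E[U(s,σ)|𝓕_v], one has limsup_n |X_{t_n}(t_n) − X_{t_n}(t)| = 0. -/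
/-!
Common setup for "On the non-zero-sum stopping game ending at the maximum of the stopping
strategies".  Time is indexed by `[0,∞] = ℝ≥0∞`.  Since `Ω` is at most countable and `ℙ`
charges every point, essential suprema/infima over families of stopping times coincide with
the pointwise ones, which is how they are formalized below.
-/

open MeasureTheory Filter Set
open scoped ENNReal Topology

noncomputable section

namespace StoppingGames

variable {Ω : Type*} [mΩ : MeasurableSpace Ω]

/-- On a countable space where `μ` charges every point, a.e. properties hold everywhere. -/
lemma all_of_ae {μ : Measure Ω} (hμ : ∀ ω : Ω, μ {ω} ≠ 0) {p : Ω → Prop}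
    (h : ∀ᵐ ω ∂μ, p ω) : ∀ ω, p ω := by
  intro ω
  by_contra hc
  exact hμ ω (measure_mono_null (by simpa using hc) h)

/-- Measurability of `ω ↦ F (σ ω) ω` on a countable space. -/
lemma meas_comp [Countable Ω] {σ : Ω → ℝ≥0∞} (hσ : Measurable σ) {F : ℝ≥0∞ → Ω → ℝ}
    (hF : ∀ t, Measurable (F t)) : Measurable (fun ω => F (σ ω) ω) := by
  intro B hB
  have : (fun ω => F (σ ω) ω) ⁻¹' B = ⋃ t ∈ Set.range σ, (σ ⁻¹' {t} ∩ F t ⁻¹' B) := by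
    ext ω
    simp only [mem_preimage, mem_iUnion, mem_inter_iff, mem_singleton_iff, mem_range]
    constructor
    · intro h; exact ⟨σ ω, ⟨ω, rfl⟩, rfl, h⟩
    · rintro ⟨t, _, rfl, h⟩; exact h
  rw [this]
  exact MeasurableSet.biUnion (Set.countable_range σ)
    fun t _ => (hσ (measurableSet_singleton t)).inter (hF t hB)

/-- Conditional expectations of functions that are uniformly `c`-close are `c`-close a.e. -/
lemma condexp_abs_sub_le {μ : Measure Ω} [IsProbabilityMeasure μ]
    {m : MeasurableSpace Ω} (hm : m ≤ mΩ) {f g : Ω → ℝ} (hf : Integrable f μ)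
    (hg : Integrable g μ) {c : ℝ} (hc : ∀ ω, |f ω - g ω| ≤ c) :
    ∀ᵐ ω ∂μ, |(μ[f|m]) ω - (μ[g|m]) ω| ≤ c := by
  have hsub := condExp_sub (μ := μ) (m := m) hf hg
  have h1 : μ[f - g|m] ≤ᵐ[μ] μ[fun _ => c|m] :=
    condExp_mono (hf.sub hg) (integrable_const c)
      (ae_of_all _ fun ω => (abs_le.mp (hc ω)).2)
  have h2 : μ[fun _ => (-c)|m] ≤ᵐ[μ] μ[f - g|m] :=
    condExp_mono (integrable_const _) (hf.sub hg)
      (ae_of_all _ fun ω => (abs_le.mp (hc ω)).1)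
  rw [condExp_const (μ := μ) hm c] at h1
  rw [condExp_const (μ := μ) hm (-c)] at h2
  filter_upwards [hsub, h1, h2] with ω e1 e2 e3
  have he : (μ[f|m]) ω - (μ[g|m]) ω = (μ[f - g|m]) ω := by
    rw [e1]; simp
  rw [he]
  exact abs_le.mpr ⟨e3, e2⟩

/-- a step in the proof of Lemma 3.1: for every stopping time `v` and all
`s, s' ∈ [0,∞]`, `|ess inf_{σ∈𝒯_v} E[U(s,σ)|𝓕_v] − ess inf_{σ∈𝒯_v} E[U(s',σ)|𝓕_v]| ≤ r(|s−s'|)`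
a.s.; in particular, for `t_n ↘ t` with `|t_n − t| < 1/n`, setting
`X_v(s) := ess inf_{σ∈𝒯_v} E[U(s,σ)|𝓕_v]`, one has `limsup_n |X_{t_n}(t_n) − X_{t_n}(t)| = 0`. -/
theorem Xat_modulus [Countable Ω] (μ : Measure Ω) [IsProbabilityMeasure μ]
    (𝓕 : Filtration ℝ≥0∞ mΩ) (hsetup : UsualSetup μ 𝓕)
    (U : ℝ≥0∞ → ℝ≥0∞ → Ω → ℝ) (r : ℝ≥0∞ → ℝ) (hU : PayoffAssumption 𝓕 U r) :
    (∀ (v : Ω → ℝ≥0∞) (hv : IsStoppingTime 𝓕 (fun ω => (v ω : WithTop ℝ≥0∞))) (s s' : ℝ≥0∞),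
      ∀ᵐ ω ∂μ, |XatST μ 𝓕 U hv s ω - XatST μ 𝓕 U hv s' ω| ≤ r (dd s s')) ∧
    (∀ (t : ℝ≥0∞) (tseq : ℕ → ℝ≥0∞), Antitone tseq → (∀ n, t ≤ tseq n) →
      Tendsto tseq atTop (𝓝 t) → (∀ n : ℕ, dd (tseq n) t < 1 / (n : ℝ≥0∞)) →
      ∀ᵐ ω ∂μ,
        Filter.limsup
          (fun n => |Xat μ 𝓕 U (tseq n) (tseq n) ω - Xat μ 𝓕 U (tseq n) t ω|) atTop = 0) := by
  obtain ⟨⟨M, hM⟩, hUmeas, hrmono, _hrnn, _, _hr0, hrtend, hmod⟩ := hU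
  have hμ := hsetup.1
  have key : ∀ (v : Ω → ℝ≥0∞) (hv : IsStoppingTime 𝓕 (fun ω => (v ω : WithTop ℝ≥0∞))) (s s' : ℝ≥0∞) (ω : Ω),
      |XatST μ 𝓕 U hv s ω - XatST μ 𝓕 U hv s' ω| ≤ r (dd s s') := by
    intro v hv s s'
    have hm : hv.measurableSpace ≤ mΩ := hv.measurableSpace_le
    have hint : ∀ (s₀ : ℝ≥0∞) (σ : Ω → ℝ≥0∞), IsStoppingTime 𝓕 (fun ω => (σ ω : WithTop ℝ≥0∞)) →
        Integrable (fun ω' => U s₀ (σ ω') ω') μ := by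
      intro s₀ σ hσ
      have hmeas : Measurable fun ω' => U s₀ (σ ω') ω' :=
        meas_comp (by simpa using hσ.measurable'.untopD (0 : ℝ≥0∞))
          (fun t => (hUmeas s₀ t).mono (𝓕.le _) le_rfl)
      exact (integrable_const M).mono' hmeas.aestronglyMeasurable
        (ae_of_all _ fun ω => by simpa using hM s₀ (σ ω) ω)
    have hptA : ∀ σ : STge 𝓕 v, ∀ ω : Ω,
        |(μ[fun ω' => U s (σ.1 ω') ω'|hv.measurableSpace]) ω -
          (μ[fun ω' => U s' (σ.1 ω') ω'|hv.measurableSpace]) ω| ≤ r (dd s s') := by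
      intro σ
      refine all_of_ae hμ
        (condexp_abs_sub_le hm (hint s σ.1 σ.2.1) (hint s' σ.1 σ.2.1) ?_)
      intro ω
      have h := hmod s (σ.1 ω) s' (σ.1 ω) ω
      simpa [dd, tsub_self] using h
    have hbd : ∀ (s₀ : ℝ≥0∞) (σ : STge 𝓕 v) (ω : Ω),
        |(μ[fun ω' => U s₀ (σ.1 ω') ω'|hv.measurableSpace]) ω| ≤ M := by
      intro s₀ σ
      have h := all_of_ae hμ
        (condexp_abs_sub_le hm (hint s₀ σ.1 σ.2.1) (integrable_const (0 : ℝ))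
          (c := M) (fun ω => by simpa using hM s₀ (σ.1 ω) ω))
      intro ω
      have h2 := h ω
      rwa [condExp_const (μ := μ) hm (0 : ℝ), sub_zero] at h2
    intro ω
    have hne : Nonempty (STge 𝓕 v) := ⟨⟨v, hv, fun ω => le_rfl⟩⟩
    set A : STge 𝓕 v → ℝ :=
      fun σ => (μ[fun ω' => U s (σ.1 ω') ω'|hv.measurableSpace]) ω with hA
    set B : STge 𝓕 v → ℝ :=
      fun σ => (μ[fun ω' => U s' (σ.1 ω') ω'|hv.measurableSpace]) ω with hB
    have hbdA : BddBelow (Set.range A) := by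
      refine ⟨-M, ?_⟩
      rintro x ⟨σ, rfl⟩
      exact (abs_le.mp (hbd s σ ω)).1
    have hbdB : BddBelow (Set.range B) := by
      refine ⟨-M, ?_⟩
      rintro x ⟨σ, rfl⟩
      exact (abs_le.mp (hbd s' σ ω)).1
    have h1 : (⨅ σ, A σ) ≤ (⨅ σ, B σ) + r (dd s s') := by
      rw [← sub_le_iff_le_add]
      refine le_ciInf fun σ => ?_
      have hAB : A σ ≤ B σ + r (dd s s') := by
        have := (abs_le.mp (hptA σ ω)).2
        linarith
      have hle := ciInf_le hbdA σ
      linarith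
    have h2 : (⨅ σ, B σ) ≤ (⨅ σ, A σ) + r (dd s s') := by
      rw [← sub_le_iff_le_add]
      refine le_ciInf fun σ => ?_
      have hAB : B σ ≤ A σ + r (dd s s') := by
        have := (abs_le.mp (hptA σ ω)).1
        linarith
      have hle := ciInf_le hbdB σ
      linarith
    show |(⨅ σ, A σ) - (⨅ σ, B σ)| ≤ r (dd s s')
    rw [abs_le]
    constructor <;> linarith
  refine ⟨fun v hv s s' => ae_of_all _ (key v hv s s'), ?_⟩
  intro t tseq _ _ _ hdd
  refine ae_of_all _ fun ω => ?_
  have hkey : ∀ n : ℕ,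
      |Xat μ 𝓕 U (tseq n) (tseq n) ω - Xat μ 𝓕 U (tseq n) t ω| ≤ r (dd (tseq n) t) := by
    intro n
    have h := key (fun _ => tseq n) (isStoppingTime_const 𝓕 (tseq n)) (tseq n) t ω
    simpa [XatST, Xat, IsStoppingTime.measurableSpace_const] using h
  have hg : Tendsto (fun n : ℕ => r (1 / (n : ℝ≥0∞))) atTop (𝓝 0) := by
    have h1 : Tendsto (fun n : ℕ => 1 / (n : ℝ≥0∞)) atTop (𝓝[>] 0) := by
      apply tendsto_nhdsWithin_of_tendsto_nhds_of_eventually_within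
      · simpa [one_div] using ENNReal.tendsto_inv_nat_nhds_zero
      · refine Eventually.of_forall fun n => ?_
        simp [mem_Ioi, pos_iff_ne_zero, ENNReal.div_eq_zero_iff]
    exact hrtend.comp h1
  have hsq : Tendsto
      (fun n => |Xat μ 𝓕 U (tseq n) (tseq n) ω - Xat μ 𝓕 U (tseq n) t ω|) atTop (𝓝 0) :=
    squeeze_zero (fun n => abs_nonneg _)
      (fun n => (hkey n).trans (hrmono (hdd n).le)) hg
  exact hsq.limsup_eq


end StoppingGames
end
end
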